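/- Let 0 < r < 1 and let (T₁,…,T_d) be a tuple of invertible bounded operators on a complex Hilbert space H. Then (T₁,…,T_d) is a doubly commuting tuple of operators in QA_r if and only if there exist a tuple (U₁,…,U_d) of commuting unitary operators on H and a tuple (D₁,…,D_d) of commuting self-adjoint invertible operators on H with spectrum σ(D_j) ⊆ { z ∈ ℂ : r ≤ |z| ≤ r⁻¹ } for each j, such that D_iU_j = U_jD_i for all i ≠ j and T_j = U_jD_j for each j = 1,…,d. -/

import Mathlib

open ContinuousLinearMap

variable {H : Type*} [NormedAddCommGroup H] [InnerProductSpace ℂ H] [CompleteSpace H]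

/-- `T ∈ C_{1,r}`: `T` is invertible, `‖T‖ ≤ 1` and `‖r • T⁻¹‖ ≤ 1`. -/
def MemC1r (r : ℝ) (T : H →L[ℂ] H) : Prop :=
  IsUnit T ∧ ‖T‖ ≤ 1 ∧ ‖(r : ℂ) • Ring.inverse T‖ ≤ 1

/-- `T ∈ QA_r`: `T` is invertible, `‖r • T‖ ≤ 1` and `‖r • T⁻¹‖ ≤ 1`. -/
def MemQA (r : ℝ) (T : H →L[ℂ] H) : Prop :=
  IsUnit T ∧ ‖(r : ℂ) • T‖ ≤ 1 ∧ ‖(r : ℂ) • Ring.inverse T‖ ≤ 1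

/-- A tuple of operators is doubly commuting if `TᵢTⱼ = TⱼTᵢ` and `TᵢTⱼ* = Tⱼ*Tᵢ` for `i ≠ j`. -/
def DoublyCommuting {d : ℕ} (T : Fin d → H →L[ℂ] H) : Prop :=
  ∀ i j, i ≠ j → T i * T j = T j * T i ∧ T i * adjoint (T j) = adjoint (T j) * T i

private lemma commute_cfc_aux {a b : H →L[ℂ] H} (hb : Commute b a)
    (f : ℝ → ℝ) : Commute b (cfc f a) := by
  refine cfc_cases (fun x => Commute b x) a f (Commute.zero_right b) fun hf hsa => ?_
  suffices h : ∀ g : C(spectrum ℝ a, ℝ), Commute b (cfcHom hsa g) from h _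
  intro g
  have hclosed : IsClosed {x : H →L[ℂ] H | Commute b x} :=
    isClosed_eq (continuous_const.mul continuous_id) (continuous_id.mul continuous_const)
  induction g using ContinuousMap.induction_on_of_compact with
  | const r =>
      have : (ContinuousMap.const (spectrum ℝ a) r) = algebraMap ℝ C(spectrum ℝ a, ℝ) r := rfl
      rw [this, AlgHomClass.commutes]
      exact (Algebra.commutes r b).symm
  | id => rw [cfcHom_id hsa]; exact hb
  | star_id => rw [star_trivial, cfcHom_id hsa]; exact hb
  | add f g hf hg => rw [map_add]; exact hf.add_right hg
  | mul f g hf hg => rw [map_mul]; exact hf.mul_right hg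
  | frequently f hf =>
      exact (hclosed.preimage (cfcHom_isClosedEmbedding hsa).continuous).closure_subset
        (mem_closure_iff_frequently.mpr hf)

private lemma norm_le_of_spec {a : H →L[ℂ] H} (ha : IsSelfAdjoint a) {M : ℝ} (hM : 0 ≤ M)
    (h : ∀ z ∈ spectrum ℂ a, ‖z‖ ≤ M) : ‖a‖ ≤ M := by
  have h1 := ha.spectralRadius_eq_nnnorm
  have h2 : spectralRadius ℂ a ≤ ENNReal.ofReal M := by
    refine iSup₂_le fun k hk => ?_
    rw [← enorm_eq_nnnorm, ← ofReal_norm]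
    exact ENNReal.ofReal_le_ofReal (h k hk)
  rw [h1, ← enorm_eq_nnnorm, ← ofReal_norm] at h2
  exact (ENNReal.ofReal_le_ofReal_iff hM).mp h2

private lemma commute_inverse {M : Type*} [MonoidWithZero M] {a b : M}
    (h : Commute a b) (hb : IsUnit b) : Commute a (Ring.inverse b) := by
  have h' : Commute a ↑hb.unit := by rwa [hb.unit_spec]
  rw [← hb.unit_spec, Ring.inverse_unit]
  exact h'.units_inv_right

private lemma commute_star_unitary {M : Type*} [Monoid M] [StarMul M] {u x : M}
    (hu : u ∈ unitary M) (h : Commute x u) : Commute x (star u) := by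
  have h' : Commute x ↑(⟨u, star u, Unitary.mul_star_self_of_mem hu,
      Unitary.star_mul_self_of_mem hu⟩ : Mˣ) := h
  exact h'.units_inv_right

private lemma le_inv_of_mul_le {r x : ℝ} (hr : 0 < r) (h : r * x ≤ 1) : x ≤ r⁻¹ := by
  have h' : x ≤ 1 / r := (le_div_iff₀ hr).mpr (by rwa [mul_comm] at h)
  simpa [one_div] using h'

private lemma norm_smul_real (r : ℝ) (hr : 0 ≤ r) (T : H →L[ℂ] H) :
    ‖(r : ℂ) • T‖ = r * ‖T‖ := by
  rw [norm_smul, Complex.norm_real, Real.norm_eq_abs, abs_of_nonneg hr]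

private lemma spec_mem_Icc {r : ℝ} (hr0 : 0 < r) [Nontrivial H] {T : H →L[ℂ] H} (hT : IsUnit T)
    (h1 : ‖T‖ ≤ r⁻¹) (h2 : ‖Ring.inverse T‖ ≤ r⁻¹) :
    ∀ x ∈ spectrum ℝ (star T * T), x ∈ Set.Icc (r ^ 2) (r⁻¹ ^ 2) := by
  intro x hx
  have haU : IsUnit (star T * T) := hT.star.mul hT
  have hxnn : (0 : ℝ) ≤ x :=
    spectrum_nonneg_of_nonneg (star_mul_self_nonneg T) hx
  constructor
  · have hx0 : x ≠ 0 := by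
      rintro rfl
      exact spectrum.zero_notMem ℝ haU hx
    have hx0' : 0 < x := lt_of_le_of_ne hxnn (Ne.symm hx0)
    have hxu : ((Units.mk0 x hx0 : ℝˣ) : ℝ) ∈ spectrum ℝ ((haU.unit : H →L[ℂ] H)) := by
      rwa [haU.unit_spec]
    have hxi := spectrum.inv_mem_iff.mp hxu
    have hinv : ((haU.unit⁻¹ : (H →L[ℂ] H)ˣ) : H →L[ℂ] H)
        = Ring.inverse T * star (Ring.inverse T) := by
      apply Units.inv_eq_of_mul_eq_one_right
      rw [haU.unit_spec, mul_assoc, ← mul_assoc T, Ring.mul_inverse_cancel _ hT, one_mul,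
        ← star_mul, Ring.inverse_mul_cancel _ hT, star_one]
    have hni : ‖(x⁻¹ : ℝ)‖ ≤ r⁻¹ * r⁻¹ := by
      refine le_trans (spectrum.norm_le_norm_of_mem hxi) ?_
      rw [hinv]
      refine le_trans (norm_mul_le _ _) ?_
      rw [norm_star]
      exact mul_le_mul h2 h2 (norm_nonneg _) (le_trans (norm_nonneg _) h2)
    rw [Real.norm_eq_abs, abs_of_pos (inv_pos.mpr hx0')] at hni
    rw [sq]
    calc r * r = (r⁻¹ * r⁻¹)⁻¹ := by rw [← mul_inv, inv_inv]
    _ ≤ (x⁻¹)⁻¹ := inv_anti₀ (inv_pos.mpr hx0') hni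
    _ = x := inv_inv x
  · have := spectrum.norm_le_norm_of_mem hx
    rw [Real.norm_eq_abs, abs_of_nonneg hxnn] at this
    refine le_trans this ?_
    refine le_trans (norm_mul_le _ _) ?_
    rw [norm_star, sq]
    exact mul_le_mul h1 h1 (norm_nonneg _) (le_trans (norm_nonneg _) h1)

theorem stmt18 (r : ℝ) (hr0 : 0 < r) (hr1 : r < 1) (d : ℕ) (T : Fin d → H →L[ℂ] H)
    (hu : ∀ i, IsUnit (T i)) :
    (DoublyCommuting T ∧ ∀ i, MemQA r (T i)) ↔
      ∃ U D : Fin d → H →L[ℂ] H,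
        (∀ i, U i ∈ unitary (H →L[ℂ] H)) ∧
        (∀ i j, U i * U j = U j * U i) ∧
        (∀ i, IsSelfAdjoint (D i)) ∧ (∀ i, IsUnit (D i)) ∧
        (∀ i j, D i * D j = D j * D i) ∧
        (∀ j, spectrum ℂ (D j) ⊆ {z : ℂ | r ≤ ‖z‖ ∧ ‖z‖ ≤ r⁻¹}) ∧
        (∀ i j, i ≠ j → D i * U j = U j * D i) ∧
        (∀ j, T j = U j * D j) := by
  rcases subsingleton_or_nontrivial H with hH | hH
  · -- trivial case
    have hss : Subsingleton (H →L[ℂ] H) :=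
      ⟨fun f g => ContinuousLinearMap.ext fun x => Subsingleton.elim _ _⟩
    have hspec : ∀ a : H →L[ℂ] H, spectrum ℂ a = ∅ := by
      intro a
      ext z
      simp only [Set.mem_empty_iff_false, iff_false]
      intro hz
      exact spectrum.mem_iff.mp hz (isUnit_of_subsingleton _)
    have hnorm : ∀ a : H →L[ℂ] H, ‖a‖ = 0 := fun a => by
      rw [Subsingleton.elim a 0, norm_zero]
    refine iff_of_true ⟨fun i j _ => ⟨Subsingleton.elim _ _, Subsingleton.elim _ _⟩,
      fun i => ⟨hu i, by rw [hnorm]; norm_num, by rw [hnorm]; norm_num⟩⟩ ?_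
    refine ⟨fun _ => 1, fun _ => 1, fun i => ?_, fun i j => rfl, fun i => IsSelfAdjoint.one _,
      fun i => isUnit_one, fun i j => rfl, fun j => by rw [hspec]; exact Set.empty_subset _,
      fun i j _ => rfl, fun j => Subsingleton.elim _ _⟩
    exact ⟨by rw [star_one, one_mul], by rw [star_one, one_mul]⟩
  constructor
  · rintro ⟨hdc, hqa⟩
    -- norm bounds
    have hTn : ∀ j, ‖T j‖ ≤ r⁻¹ := fun j => by
      have := (hqa j).2.1
      rw [norm_smul_real r hr0.le] at this
      exact le_inv_of_mul_le hr0 this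
    have hTin : ∀ j, ‖Ring.inverse (T j)‖ ≤ r⁻¹ := fun j => by
      have := (hqa j).2.2
      rw [norm_smul_real r hr0.le] at this
      exact le_inv_of_mul_le hr0 this
    set a : Fin d → H →L[ℂ] H := fun j => star (T j) * T j with ha_def
    have haspec : ∀ j, ∀ x ∈ spectrum ℝ (a j), x ∈ Set.Icc (r ^ 2) (r⁻¹ ^ 2) :=
      fun j => spec_mem_Icc hr0 (hu j) (hTn j) (hTin j)
    have hasa : ∀ j, IsSelfAdjoint (a j) := fun j => IsSelfAdjoint.star_mul_self (T j)
    set D : Fin d → H →L[ℂ] H := fun j => cfc Real.sqrt (a j) with hD_def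
    have hcont : ∀ j, ContinuousOn Real.sqrt (spectrum ℝ (a j)) :=
      fun j => Real.continuous_sqrt.continuousOn
    have hDsa : ∀ j, IsSelfAdjoint (D j) := fun j => cfc_predicate Real.sqrt (a j)
    have hDspecR : ∀ j, ∀ y ∈ spectrum ℝ (D j), y ∈ Set.Icc r r⁻¹ := by
      intro j y hy
      rw [hD_def] at hy
      simp only at hy
      rw [cfc_map_spectrum Real.sqrt (a j) (hasa j) (hcont j)] at hy
      obtain ⟨x, hx, rfl⟩ := hy
      obtain ⟨hx1, hx2⟩ := haspec j x hx
      constructor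
      · calc r = Real.sqrt (r ^ 2) := (Real.sqrt_sq hr0.le).symm
        _ ≤ Real.sqrt x := Real.sqrt_le_sqrt hx1
      · calc Real.sqrt x ≤ Real.sqrt (r⁻¹ ^ 2) := Real.sqrt_le_sqrt hx2
        _ = r⁻¹ := Real.sqrt_sq (by positivity)
    have hDu : ∀ j, IsUnit (D j) := by
      intro j
      refine spectrum.isUnit_of_zero_notMem (R := ℝ) ?_
      intro h0
      have := (hDspecR j 0 h0).1
      linarith
    have hD2 : ∀ j, D j * D j = star (T j) * T j := by
      intro j
      rw [hD_def]
      simp only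
      rw [← cfc_mul Real.sqrt Real.sqrt (a j) (hcont j) (hcont j)]
      calc cfc (fun x => Real.sqrt x * Real.sqrt x) (a j)
          = cfc (fun x : ℝ => x) (a j) := by
            refine cfc_congr fun x hx => ?_
            exact Real.mul_self_sqrt (le_trans (by positivity) (haspec j x hx).1)
      _ = a j := cfc_id' ℝ (a j) (hasa j)
      _ = star (T j) * T j := rfl
    set U : Fin d → H →L[ℂ] H := fun j => T j * Ring.inverse (D j) with hU_def
    have hTUD : ∀ j, T j = U j * D j := by
      intro j
      rw [hU_def]
      simp only
      rw [mul_assoc, Ring.inverse_mul_cancel _ (hDu j), mul_one]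
    have hsDinv : ∀ j, star (Ring.inverse (D j)) = Ring.inverse (D j) := by
      intro j
      rw [← Ring.inverse_star, (hDsa j).star_eq]
    have hUsU : ∀ j, star (U j) * U j = 1 := by
      intro j
      rw [hU_def]
      simp only
      rw [star_mul, hsDinv]
      calc Ring.inverse (D j) * star (T j) * (T j * Ring.inverse (D j))
          = Ring.inverse (D j) * (star (T j) * T j * Ring.inverse (D j)) := by
            noncomm_ring
      _ = Ring.inverse (D j) * (D j * D j * Ring.inverse (D j)) := by rw [← hD2 j]
      _ = Ring.inverse (D j) * (D j * (D j * Ring.inverse (D j))) := by rw [mul_assoc (D j)]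
      _ = 1 := by rw [Ring.mul_inverse_cancel _ (hDu j), mul_one,
            Ring.inverse_mul_cancel _ (hDu j)]
    have hUisU : ∀ j, IsUnit (U j) := fun j =>
      (hu j).mul ((isUnit_ringInverse).mpr (hDu j))
    have hUu : ∀ j, U j ∈ unitary (H →L[ℂ] H) := by
      intro j
      refine Unitary.mem_iff.mpr ⟨hUsU j, ?_⟩
      have hinv := Units.inv_eq_of_mul_eq_one_left (u := (hUisU j).unit)
        (a := star (U j)) (by rw [(hUisU j).unit_spec]; exact hUsU j)
      calc U j * star (U j) = ↑(hUisU j).unit * ↑(hUisU j).unit⁻¹ := by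
            rw [hinv, (hUisU j).unit_spec]
      _ = 1 := (hUisU j).unit.mul_inv
    -- commutation relations
    have hcTT : ∀ i j, i ≠ j → Commute (T i) (T j) := fun i j hij => (hdc i j hij).1
    have hcTS : ∀ i j, i ≠ j → Commute (T i) (star (T j)) := by
      intro i j hij
      have := (hdc i j hij).2
      rwa [← star_eq_adjoint] at this
    have hcTa : ∀ i j, i ≠ j → Commute (T i) (a j) :=
      fun i j hij => (hcTS i j hij).mul_right (hcTT i j hij)
    have hcTD : ∀ i j, i ≠ j → Commute (T i) (D j) :=
      fun i j hij => commute_cfc_aux (hcTa i j hij) Real.sqrt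
    have hcSa : ∀ i j, i ≠ j → Commute (star (T i)) (a j) := by
      intro i j hij
      have h1 : Commute (star (T i)) (T j) := ((hcTS j i hij.symm).symm)
      have h2 : Commute (star (T i)) (star (T j)) := (hcTT i j hij).star_star
      exact h2.mul_right h1
    have hcSD : ∀ i j, i ≠ j → Commute (star (T i)) (D j) :=
      fun i j hij => commute_cfc_aux (hcSa i j hij) Real.sqrt
    have hcaD : ∀ i j, i ≠ j → Commute (a i) (D j) :=
      fun i j hij => (hcSD i j hij).mul_left (hcTD i j hij)
    have hcDD : ∀ i j, i ≠ j → Commute (D i) (D j) :=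
      fun i j hij => (commute_cfc_aux (hcaD i j hij).symm Real.sqrt).symm
    have hcDD' : ∀ i j, Commute (D i) (D j) := by
      intro i j
      rcases eq_or_ne i j with rfl | hij
      · exact Commute.refl _
      · exact hcDD i j hij
    have hcDU : ∀ i j, i ≠ j → Commute (D i) (U j) := by
      intro i j hij
      rw [hU_def]
      simp only
      exact ((hcTD j i hij.symm).symm).mul_right
        (commute_inverse (hcDD i j hij) (hDu j))
    have hcUU : ∀ i j, Commute (U i) (U j) := by
      intro i j
      rcases eq_or_ne i j with rfl | hij
      · exact Commute.refl _
      have c1 : Commute (T i) (U j) := by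
        rw [hU_def]
        simp only
        exact (hcTT i j hij).mul_right (commute_inverse (hcTD i j hij) (hDu j))
      have c2 : Commute (Ring.inverse (D i)) (U j) :=
        ((commute_inverse ((hcDU i j hij).symm) (hDu i)).symm)
      have : Commute (T i * Ring.inverse (D i)) (U j) := c1.mul_left c2
      exact this
    -- spectrum in ℂ
    have hDspecC : ∀ j, spectrum ℂ (D j) ⊆
        {z : ℂ | r ≤ ‖z‖ ∧ ‖z‖ ≤ r⁻¹} := by
      intro j z hz
      rw [← (hDsa j).spectrumRestricts.algebraMap_image] at hz
      obtain ⟨x, hx, rfl⟩ := hz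
      obtain ⟨h1, h2⟩ := hDspecR j x hx
      have hxpos : 0 < x := lt_of_lt_of_le hr0 h1
      constructor
      · simpa [Complex.norm_real, abs_of_pos hxpos] using h1
      · simpa [Complex.norm_real, abs_of_pos hxpos] using h2
    exact ⟨U, D, hUu, fun i j => hcUU i j, hDsa, hDu, fun i j => hcDD' i j, hDspecC,
      fun i j hij => hcDU i j hij, hTUD⟩
  · rintro ⟨U, D, hUu, hUU, hDsa, hDu, hDD, hDspec, hDU, hTeq⟩
    have hDn : ∀ j, ‖D j‖ ≤ r⁻¹ := by
      intro j
      refine norm_le_of_spec (hDsa j) (by positivity) fun z hz => ?_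
      have := (hDspec j hz).2
      exact this
    constructor
    · -- doubly commuting
      intro i j hij
      have cUiUj : Commute (U i) (U j) := hUU i j
      have cDiUj : Commute (D i) (U j) := hDU i j hij
      have cUiDj : Commute (U i) (D j) := (hDU j i hij.symm).symm
      have cDiDj : Commute (D i) (D j) := hDD i j
      have cTiUj : Commute (T i) (U j) := by
        rw [hTeq i]; exact cUiUj.mul_left cDiUj
      have cTiDj : Commute (T i) (D j) := by
        rw [hTeq i]; exact cUiDj.mul_left cDiDj
      constructor
      · rw [hTeq i, hTeq j]
        exact (cUiUj.mul_right cUiDj).mul_left (cDiUj.mul_right cDiDj)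
      · rw [← star_eq_adjoint, hTeq j, star_mul, (hDsa j).star_eq]
        exact cTiDj.mul_right (commute_star_unitary (hUu j) cTiUj)
    · -- MemQA
      intro j
      refine ⟨hu j, ?_, ?_⟩
      · rw [hTeq j, norm_smul_real r hr0.le,
          CStarRing.norm_coe_unitary_mul (⟨U j, hUu j⟩ : unitary (H →L[ℂ] H)) (D j)]
        calc r * ‖D j‖ ≤ r * r⁻¹ :=
              mul_le_mul_of_nonneg_left (hDn j) hr0.le
        _ = 1 := mul_inv_cancel₀ hr0.ne'
      · have hTinv : Ring.inverse (T j) = Ring.inverse (D j) * star (U j) := by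
          have h1 : ((hu j).unit : H →L[ℂ] H) * (Ring.inverse (D j) * star (U j)) = 1 := by
            rw [(hu j).unit_spec, hTeq j, mul_assoc (U j) (D j), ← mul_assoc (D j),
              Ring.mul_inverse_cancel _ (hDu j), one_mul,
              Unitary.mul_star_self_of_mem (hUu j)]
          have h2 := Units.inv_eq_of_mul_eq_one_right (u := (hu j).unit) h1
          rw [← (hu j).unit_spec, Ring.inverse_unit]
          exact h2
        have hDinvsa : IsSelfAdjoint (Ring.inverse (D j)) := by
          rw [IsSelfAdjoint, ← Ring.inverse_star, (hDsa j).star_eq]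
        have hkey : (((hDu j).unit⁻¹ : (H →L[ℂ] H)ˣ) : H →L[ℂ] H) = Ring.inverse (D j) := by
          rw [← Ring.inverse_unit, (hDu j).unit_spec]
        have hDinvn : ‖Ring.inverse (D j)‖ ≤ r⁻¹ := by
          refine norm_le_of_spec hDinvsa (by positivity) fun z hz => ?_
          have hzu : z ≠ 0 := by
            rintro rfl
            exact spectrum.zero_notMem ℂ ((isUnit_ringInverse).mpr (hDu j)) hz
          have hz2 : (((Units.mk0 z hzu)⁻¹⁻¹ : ℂˣ) : ℂ)
              ∈ spectrum ℂ (((hDu j).unit⁻¹ : (H →L[ℂ] H)ˣ) : H →L[ℂ] H) := by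
            rw [inv_inv, hkey]
            exact hz
          have hz3 := spectrum.inv_mem_iff.mpr hz2
          rw [(hDu j).unit_spec] at hz3
          have hz4 : z⁻¹ ∈ spectrum ℂ (D j) := by
            simpa [Units.val_inv_eq_inv_val] using hz3
          have h5 := (hDspec j hz4).1
          rw [norm_inv] at h5
          have habs : 0 < ‖z‖ := norm_pos_iff.mpr hzu
          calc ‖z‖ = (‖z‖⁻¹)⁻¹ := (inv_inv _).symm
          _ ≤ r⁻¹ := inv_anti₀ hr0 h5
        rw [hTinv, norm_smul_real r hr0.le,
          CStarRing.norm_mul_coe_unitary (Ring.inverse (D j))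
            (⟨star (U j), Unitary.star_mem (hUu j)⟩ : unitary (H →L[ℂ] H))]
        calc r * ‖Ring.inverse (D j)‖ ≤ r * r⁻¹ :=
              mul_le_mul_of_nonneg_left hDinvn hr0.le
        _ = 1 := mul_inv_cancel₀ hr0.ne'
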